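/- arXiv:1608.08014 — 3 statements merged into one kernel-verified Lean document; each statement's English description precedes it below -/
import Mathlib

section
/- Let B be Exponential(1), independent of Y = Σ_{z∈S} λ_z X_z with X_z independent Exponential(1) and λ_z > 0 pairwise distinct. For constants λ_j, ν, ξ > 0, P[λ_j B / (ν + Y) ≥ ξ] = e^{−ξν/λ_j} · (1 − Σ_{z∈S} (∏_{k∈S,k≠z}(λ_z−λ_k)^{-1}) λ_z^{|S|} ξ / (λ_j + λ_z ξ)). -/
open MeasureTheory ProbabilityTheory Real Set

open scoped ENNReal

lemma my_lintegral_prod_indep {Ω : Type*} [MeasurableSpace Ω] {P : Measure Ω}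
    [IsProbabilityMeasure P] {ι : Type*} {F : ι → Ω → ℝ≥0∞}
    (hF : ∀ i, Measurable (F i)) (h : iIndepFun F P)
    (s : Finset ι) : ∫⁻ ω, ∏ i ∈ s, F i ω ∂P = ∏ i ∈ s, ∫⁻ ω, F i ω ∂P := by
  classical
  induction s using Finset.induction_on with
  | empty => simp
  | @insert a s hi ih =>
    have hind : IndepFun (F a) (∏ j ∈ s, F j) P :=
      (h.indepFun_finset_prod_of_notMem hF hi).symm
    have hmg : Measurable (∏ j ∈ s, F j) := by
      simpa [Finset.prod_fn] using Finset.measurable_prod (f := F) s fun j _ => hF j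
    have key := lintegral_mul_eq_lintegral_mul_lintegral_of_indepFun (hF a) hmg hind
    simp only [Finset.prod_apply, Pi.mul_apply] at key
    simp only [Finset.prod_insert hi]
    rw [key, ih]

lemma my_exp_tail {t : ℝ} (ht : 0 ≤ t) :
    expMeasure 1 (Ici t) = ENNReal.ofReal (Real.exp (-t)) := by
  haveI : IsProbabilityMeasure (expMeasure 1) := isProbabilityMeasure_expMeasure one_pos
  have hd : expMeasure 1 = volume.withDensity (exponentialPDF 1) := rfl
  have hIic : expMeasure 1 (Iic t) = ENNReal.ofReal (1 - Real.exp (-t)) := by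
    rw [hd, withDensity_apply _ measurableSet_Iic, lintegral_exponentialPDF_eq_antiDeriv one_pos,
      if_pos ht, one_mul]
  have hsingle : expMeasure 1 {t} = 0 := by
    rw [hd, withDensity_apply _ (measurableSet_singleton t)]
    exact setLIntegral_measure_zero _ _ (measure_singleton t)
  have hexple : Real.exp (-t) ≤ 1 := exp_le_one_iff.mpr (by linarith)
  have hIio : expMeasure 1 (Iio t) = ENNReal.ofReal (1 - Real.exp (-t)) := by
    rw [← hIic, ← Iic_diff_right, measure_diff_null hsingle]
  rw [← compl_Iio, prob_compl_eq_one_sub measurableSet_Iio, hIio]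
  rw [← ENNReal.ofReal_one, ← ENNReal.ofReal_sub _ (by linarith)]
  norm_num

lemma my_exp_laplace {a : ℝ} (ha : 0 ≤ a) :
    ∫⁻ x, ENNReal.ofReal (Real.exp (-(a * x))) ∂(expMeasure 1)
      = ENNReal.ofReal ((1 + a)⁻¹) := by
  have h1a : (0:ℝ) < 1 + a := by linarith
  have hd : expMeasure 1 = volume.withDensity (exponentialPDF 1) := rfl
  have hfm : Measurable (exponentialPDF 1) := (measurable_exponentialPDFReal 1).ennreal_ofReal
  have hgm : Measurable fun x : ℝ => ENNReal.ofReal (Real.exp (-(a * x))) := by fun_prop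
  rw [hd, lintegral_withDensity_eq_lintegral_mul _ hfm hgm]
  have hpt : ∀ x : ℝ, (exponentialPDF 1 x * ENNReal.ofReal (Real.exp (-(a * x))))
      = ENNReal.ofReal ((1 + a)⁻¹) * exponentialPDF (1 + a) x := by
    intro x
    rcases lt_or_ge x 0 with hx | hx
    · rw [exponentialPDF_of_neg hx, exponentialPDF_of_neg hx, zero_mul, mul_zero]
    · rw [exponentialPDF_of_nonneg hx, exponentialPDF_of_nonneg hx,
        ← ENNReal.ofReal_mul (by positivity), ← ENNReal.ofReal_mul (by positivity)]
      rw [one_mul, ← Real.exp_add, ← mul_assoc, inv_mul_cancel₀ (ne_of_gt h1a), one_mul]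
      ring_nf
  simp only [Pi.mul_apply, hpt]
  rw [lintegral_const_mul (ENNReal.ofReal (1+a)⁻¹) (f := exponentialPDF (1+a))
      ((measurable_exponentialPDFReal (1+a)).ennreal_ofReal),
    lintegral_exponentialPDF_eq_one h1a, mul_one]

open Polynomial in
lemma my_partial_fraction {ι : Type*} [Fintype ι] [Nonempty ι] [DecidableEq ι]
    (lam : ι → ℝ) (hdist : Function.Injective lam)
    (lamj ξ : ℝ) (hξ : ξ ≠ 0) (hD : ∀ z, lamj + lam z * ξ ≠ 0) :
    ∏ z, lamj / (lamj + lam z * ξ) =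
      1 - ∑ z, (∏ k ∈ Finset.univ.erase z, (lam z - lam k)⁻¹) * lam z ^ (Fintype.card ι) * ξ
        / (lamj + lam z * ξ) := by
  classical
  set n := Fintype.card ι with hn
  set s : Finset ι := Finset.univ with hs
  have hcard : s.card = n := Finset.card_univ
  have hn1 : 1 ≤ n := Fintype.card_pos
  set x₀ : ℝ := -(lamj / ξ) with hx₀
  set D : ι → ℝ := fun z => lamj + lam z * ξ with hDdef
  have hxD : ∀ k, (-ξ) * (x₀ - lam k) = D k := by
    intro k; rw [hx₀, hDdef]; field_simp; ring
  have hinj : Set.InjOn lam s := fun a _ b _ h => hdist h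
  -- polynomial identity
  set f : ℝ[X] := X ^ n - Lagrange.nodal s lam with hf
  have hdegX : (X ^ n : ℝ[X]).degree = (n : ℕ) := degree_X_pow n
  have hdeg : f.degree < (s.card : ℕ∞) := by
    rw [hcard]
    have h1 : ((X ^ n : ℝ[X])).degree = (Lagrange.nodal s lam).degree := by
      rw [hdegX, Lagrange.degree_nodal, hcard]
    have := Polynomial.degree_sub_lt h1 (pow_ne_zero n X_ne_zero)
      (by rw [(monic_X_pow n).leadingCoeff, (Lagrange.nodal_monic).leadingCoeff])
    rwa [hdegX] at this
  have heq := Lagrange.eq_interpolate hinj hdeg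
  have H : x₀ ^ n - ∏ z ∈ s, (x₀ - lam z) =
      ∑ i ∈ s, lam i ^ n * ∏ j ∈ s.erase i, ((lam i - lam j)⁻¹ * (x₀ - lam j)) := by
    have h1 := congrArg (Polynomial.eval x₀) heq
    rw [Lagrange.interpolate_apply] at h1
    simp only [Polynomial.eval_finset_sum, eval_mul, eval_C] at h1
    have h2 : ∀ i ∈ s, Polynomial.eval x₀ (Lagrange.basis s lam i)
        = ∏ j ∈ s.erase i, ((lam i - lam j)⁻¹ * (x₀ - lam j)) := by
      intro i _
      rw [Lagrange.basis, Polynomial.eval_prod]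
      exact Finset.prod_congr rfl fun j _ => by
        simp [Lagrange.basisDivisor]
    have h3 : ∀ i ∈ s, Polynomial.eval (lam i) f = lam i ^ n := by
      intro i hi
      simp [hf, Lagrange.eval_nodal_at_node hi]
    rw [Finset.sum_congr rfl (fun i hi => by rw [h2 i hi, h3 i hi])] at h1
    simpa [hf, Lagrange.eval_nodal] using h1
  -- multiply by (-ξ)^n
  have key : lamj ^ n - ∏ z ∈ s, D z =
      -ξ * ∑ i ∈ s, lam i ^ n * ∏ j ∈ s.erase i, ((lam i - lam j)⁻¹ * D j) := by
    have hA : (-ξ) ^ n * x₀ ^ n = lamj ^ n := by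
      rw [← mul_pow]
      congr 1
      rw [hx₀]; field_simp
    have hB : (-ξ) ^ n * ∏ z ∈ s, (x₀ - lam z) = ∏ z ∈ s, D z := by
      rw [← hcard, ← Finset.prod_const, ← Finset.prod_mul_distrib]
      exact Finset.prod_congr rfl fun z _ => hxD z
    have hC : ∀ i ∈ s, (-ξ) ^ n * (lam i ^ n * ∏ j ∈ s.erase i, ((lam i - lam j)⁻¹ * (x₀ - lam j)))
        = -ξ * (lam i ^ n * ∏ j ∈ s.erase i, ((lam i - lam j)⁻¹ * D j)) := by
      intro i hi
      have hce : (s.erase i).card = n - 1 := by rw [Finset.card_erase_of_mem hi, hcard]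
      have hn' : n - 1 + 1 = n := Nat.succ_pred_eq_of_pos hn1
      have hpow : (-ξ) ^ n = (-ξ) * (-ξ) ^ (n - 1) := by
        conv_lhs => rw [← hn']
        rw [pow_succ]; ring
      rw [hpow]
      have : (-ξ) ^ (n-1) * ∏ j ∈ s.erase i, ((lam i - lam j)⁻¹ * (x₀ - lam j))
          = ∏ j ∈ s.erase i, ((lam i - lam j)⁻¹ * D j) := by
        rw [← hce, ← Finset.prod_const, ← Finset.prod_mul_distrib]
        exact Finset.prod_congr rfl fun j _ => by rw [← hxD j]; ring
      rw [← this]; ring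
    calc lamj ^ n - ∏ z ∈ s, D z
        = (-ξ) ^ n * (x₀ ^ n - ∏ z ∈ s, (x₀ - lam z)) := by rw [mul_sub, hA, hB]
      _ = (-ξ) ^ n * ∑ i ∈ s, lam i ^ n * ∏ j ∈ s.erase i, ((lam i - lam j)⁻¹ * (x₀ - lam j)) := by
          rw [H]
      _ = ∑ i ∈ s, (-ξ) ^ n * (lam i ^ n * ∏ j ∈ s.erase i, ((lam i - lam j)⁻¹ * (x₀ - lam j))) := by
          rw [Finset.mul_sum]
      _ = ∑ i ∈ s, -ξ * (lam i ^ n * ∏ j ∈ s.erase i, ((lam i - lam j)⁻¹ * D j)) := by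
          exact Finset.sum_congr rfl hC
      _ = -ξ * ∑ i ∈ s, lam i ^ n * ∏ j ∈ s.erase i, ((lam i - lam j)⁻¹ * D j) := by
          rw [Finset.mul_sum]
  -- finish
  have hprodD : ∏ z ∈ s, D z ≠ 0 := Finset.prod_ne_zero_iff.mpr fun z _ => hD z
  have h2 : ∀ i ∈ s, (∏ k ∈ s.erase i, (lam i - lam k)⁻¹) * lam i ^ n * ξ / D i
      = ξ * (lam i ^ n * ∏ j ∈ s.erase i, ((lam i - lam j)⁻¹ * D j)) / ∏ z ∈ s, D z := by
    intro i hi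
    rw [Finset.prod_mul_distrib]
    have hDe : D i * ∏ j ∈ s.erase i, D j = ∏ z ∈ s, D z := Finset.mul_prod_erase s D hi
    rw [← hDe]
    have hDi := hD i
    have hDei : ∏ j ∈ s.erase i, D j ≠ 0 :=
      Finset.prod_ne_zero_iff.mpr fun z _ => hD z
    have harr : ξ * (lam i ^ n * ((∏ j ∈ s.erase i, (lam i - lam j)⁻¹) * ∏ j ∈ s.erase i, D j))
        = (ξ * lam i ^ n * ∏ j ∈ s.erase i, (lam i - lam j)⁻¹) * ∏ j ∈ s.erase i, D j := by
      ring
    rw [harr, mul_div_mul_right _ _ hDei]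
    ring
  have hsum : ∑ i ∈ s, (∏ k ∈ s.erase i, (lam i - lam k)⁻¹) * lam i ^ n * ξ / D i
      = 1 - lamj ^ n / ∏ z ∈ s, D z := by
    rw [Finset.sum_congr rfl h2, ← Finset.sum_div, ← Finset.mul_sum]
    have hks : ∑ i ∈ s, lam i ^ n * ∏ j ∈ s.erase i, ((lam i - lam j)⁻¹ * D j)
        = (lamj ^ n - ∏ z ∈ s, D z) / (-ξ) := by
      rw [key]; field_simp
    rw [hks]
    field_simp
    ring
  have hlhs : ∏ z ∈ s, lamj / D z = lamj ^ n / ∏ z ∈ s, D z := by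
    rw [Finset.prod_div_distrib, Finset.prod_const, hcard]
  rw [hlhs, hsum]
  ring

/-- Closed-form successful transmission probability of Corollary 2: with `B` and the
`X_z` mutually independent `Exponential(1)` random variables, `λ_z > 0` pairwise
distinct and `λ_j, ν, ξ > 0`,
`P[λ_j B / (ν + Σ_z λ_z X_z) ≥ ξ]
  = e^{−ξν/λ_j} (1 − Σ_z (∏_{k≠z}(λ_z−λ_k)⁻¹) λ_z^{|S|} ξ / (λ_j + λ_z ξ))`. -/
theorem stmt3 {Ω : Type*} [MeasurableSpace Ω] (P : Measure Ω) [IsProbabilityMeasure P]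
    {ι : Type*} [Fintype ι] [Nonempty ι] [DecidableEq ι]
    (X : Option ι → Ω → ℝ) (hXm : ∀ i, Measurable (X i))
    (hindep : iIndepFun X P)
    (hexp : ∀ i, Measure.map (X i) P = expMeasure 1)
    (lam : ι → ℝ) (hpos : ∀ z, 0 < lam z) (hdist : Function.Injective lam)
    (lamj ν ξ : ℝ) (hlamj : 0 < lamj) (hν : 0 < ν) (hξ : 0 < ξ) :
    P {ω | lamj * X none ω / (ν + ∑ z, lam z * X (some z) ω) ≥ ξ} =
      ENNReal.ofReal (Real.exp (-(ξ * ν / lamj)) *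
        (1 - ∑ z, (∏ k ∈ Finset.univ.erase z, (lam z - lam k)⁻¹) *
          lam z ^ (Fintype.card ι) * ξ / (lamj + lam z * ξ))) := by
  classical
  set c : ℝ := ξ * ν / lamj with hc
  set a : ι → ℝ := fun z => ξ * lam z / lamj with ha
  have hcpos : 0 < c := by rw [hc]; positivity
  have hapos : ∀ z, 0 < a z := fun z => by rw [ha]; have := hpos z; positivity
  set T : Ω → ℝ := fun ω => c + ∑ z, a z * X (some z) ω with hT
  have hTm : Measurable T := by
    apply measurable_const.add
    exact Finset.measurable_sum _ fun z _ => measurable_const.mul (hXm (some z))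
  -- a.e. nonnegativity
  have hXnn : ∀ i : Option ι, ∀ᵐ ω ∂P, 0 ≤ X i ω := by
    intro i
    rw [ae_iff]
    have hset : {ω | ¬ 0 ≤ X i ω} = X i ⁻¹' (Iio 0) := by ext ω; simp [not_le]
    rw [hset, ← Measure.map_apply (hXm i) measurableSet_Iio, hexp i]
    have hd : expMeasure 1 = volume.withDensity (exponentialPDF 1) := rfl
    rw [hd, withDensity_apply _ measurableSet_Iio]
    exact lintegral_exponentialPDF_of_nonpos le_rfl
  have hallnn : ∀ᵐ ω ∂P, ∀ i, 0 ≤ X i ω := ae_all_iff.mpr hXnn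
  -- event rewriting
  have hsetae : {ω | lamj * X none ω / (ν + ∑ z, lam z * X (some z) ω) ≥ ξ}
      =ᵐ[P] {ω | T ω ≤ X none ω} := by
    rw [Filter.eventuallyEq_set]
    filter_upwards [hallnn] with ω hω
    have hS : 0 ≤ ∑ z, lam z * X (some z) ω :=
      Finset.sum_nonneg fun z _ => mul_nonneg (hpos z).le (hω _)
    have hd : 0 < ν + ∑ z, lam z * X (some z) ω := by linarith
    simp only [mem_setOf_eq, ge_iff_le]
    rw [le_div_iff₀ hd]
    have hTe : T ω = ξ * (ν + ∑ z, lam z * X (some z) ω) / lamj := by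
      rw [hT]
      simp only
      rw [mul_add, add_div, hc]
      congr 1
      rw [Finset.mul_sum, Finset.sum_div]
      exact Finset.sum_congr rfl fun z _ => by rw [ha]; field_simp
    rw [hTe, div_le_iff₀ hlamj]
    constructor <;> intro h <;> nlinarith
  rw [measure_congr hsetae]
  -- independence of X none and T
  have hBT : IndepFun (X none) T P := by
    set s1 : Finset (Option ι) := {none} with hs1
    set s2 : Finset (Option ι) := Finset.univ.image some with hs2
    have hdisj : Disjoint s1 s2 := by
      simp [hs1, hs2, Finset.disjoint_left]
    have h0 := hindep.indepFun_finset s1 s2 hdisj hXm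
    have hmem1 : (none : Option ι) ∈ s1 := Finset.mem_singleton_self _
    have hmem2 : ∀ z : ι, (some z : Option ι) ∈ s2 :=
      fun z => Finset.mem_image_of_mem _ (Finset.mem_univ z)
    have hφ : Measurable fun v : s1 → ℝ => v ⟨none, hmem1⟩ := measurable_pi_apply _
    have hψ : Measurable fun v : s2 → ℝ => c + ∑ z : ι, a z * v ⟨some z, hmem2 z⟩ := by
      apply measurable_const.add
      exact Finset.measurable_sum _ fun z _ => measurable_const.mul (measurable_pi_apply _)
    exact h0.comp hφ hψ
  haveI : IsProbabilityMeasure (P.map T) := Measure.isProbabilityMeasure_map hTm.aemeasurable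
  haveI : IsProbabilityMeasure (P.map (X none)) :=
    Measure.isProbabilityMeasure_map (hXm none).aemeasurable
  have hmap : P.map (fun ω => (X none ω, T ω)) = (P.map (X none)).prod (P.map T) :=
    (indepFun_iff_map_prod_eq_prod_map_map (hXm none).aemeasurable hTm.aemeasurable).mp hBT
  have hsm : MeasurableSet {p : ℝ × ℝ | p.2 ≤ p.1} := measurableSet_le measurable_snd measurable_fst
  have hEset : {ω | T ω ≤ X none ω} = (fun ω => (X none ω, T ω)) ⁻¹' {p : ℝ × ℝ | p.2 ≤ p.1} := rfl
  rw [hEset, ← Measure.map_apply ((hXm none).prodMk hTm) hsm, hmap,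
    Measure.prod_apply_symm hsm]
  have hpre : ∀ t : ℝ, ((fun b => (b, t)) ⁻¹' {p : ℝ × ℝ | p.2 ≤ p.1}) = Ici t := by
    intro t; ext b; simp [mem_Ici]
  simp only [hpre, hexp none]
  have hTnn : ∀ᵐ t ∂(P.map T), 0 ≤ t := by
    rw [ae_map_iff hTm.aemeasurable (measurableSet_Ici (a := (0:ℝ)))]
    filter_upwards [hallnn] with ω hω
    have : 0 ≤ ∑ z, a z * X (some z) ω :=
      Finset.sum_nonneg fun z _ => mul_nonneg (hapos z).le (hω _)
    show 0 ≤ T ω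
    rw [hT]; simp only; linarith
  have hcong : ∫⁻ t, expMeasure 1 (Ici t) ∂(P.map T)
      = ∫⁻ t, ENNReal.ofReal (Real.exp (-t)) ∂(P.map T) :=
    lintegral_congr_ae (hTnn.mono fun t ht => by
      show expMeasure 1 (Ici t) = ENNReal.ofReal (Real.exp (-t))
      exact my_exp_tail ht)
  rw [hcong, lintegral_map (by fun_prop) hTm]
  -- split the integrand
  have hsplit : ∀ ω, ENNReal.ofReal (Real.exp (-T ω))
      = ENNReal.ofReal (Real.exp (-c)) *
        ∏ z, ENNReal.ofReal (Real.exp (-(a z * X (some z) ω))) := by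
    intro ω
    rw [← ENNReal.ofReal_prod_of_nonneg (fun _ _ => (Real.exp_pos _).le),
      ← ENNReal.ofReal_mul (Real.exp_pos _).le, ← Real.exp_sum, ← Real.exp_add]
    congr 1
    rw [hT]
    simp only
    rw [neg_add, ← Finset.sum_neg_distrib]
  simp only [hsplit]
  have hprodmeas : Measurable fun ω => ∏ z, ENNReal.ofReal (Real.exp (-(a z * X (some z) ω))) :=
    Finset.measurable_prod _ fun z _ => by fun_prop
  rw [lintegral_const_mul _ hprodmeas]
  -- product of independent factors
  set g : Option ι → ℝ → ℝ≥0∞ :=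
    fun i => Option.rec (fun _ => 1) (fun z x => ENNReal.ofReal (Real.exp (-(a z * x)))) i with hg
  have hgm : ∀ i, Measurable (g i) := by
    rintro (_ | z)
    · exact measurable_const
    · show Measurable fun x : ℝ => ENNReal.ofReal (Real.exp (-(a z * x)))
      fun_prop
  have hFindep : iIndepFun (fun i ω => g i (X i ω)) P :=
    hindep.comp g hgm
  have hinjsome : Function.Injective (some : ι → Option ι) := Option.some_injective ι
  have hprodim : ∀ ω, (∏ z, ENNReal.ofReal (Real.exp (-(a z * X (some z) ω))))
      = ∏ i ∈ Finset.univ.image some, g i (X i ω) := by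
    intro ω
    rw [Finset.prod_image (fun x _ y _ h => hinjsome h)]
  simp only [hprodim]
  have hkey := my_lintegral_prod_indep (P := P) (F := fun i ω => g i (X i ω))
    (fun i => (hgm i).comp (hXm i)) hFindep (Finset.univ.image some)
  rw [hkey]
  have hfactor : ∀ z : ι, ∫⁻ ω, g (some z) (X (some z) ω) ∂P
      = ENNReal.ofReal (lamj / (lamj + lam z * ξ)) := by
    intro z
    have : ∫⁻ ω, g (some z) (X (some z) ω) ∂P = ∫⁻ x, g (some z) x ∂(P.map (X (some z))) :=
      (lintegral_map (hgm (some z)) (hXm (some z))).symm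
    rw [this, hexp (some z)]
    show ∫⁻ x, ENNReal.ofReal (Real.exp (-(a z * x))) ∂(expMeasure 1) = _
    rw [my_exp_laplace (hapos z).le]
    congr 1
    rw [ha]
    have h1 := hpos z
    field_simp
  rw [Finset.prod_image (fun x _ y _ h => hinjsome h), Finset.prod_congr rfl fun z _ => hfactor z]
  rw [← ENNReal.ofReal_prod_of_nonneg
      (fun z _ => (div_pos hlamj (add_pos hlamj (mul_pos (hpos z) hξ))).le),
    ← ENNReal.ofReal_mul (Real.exp_pos _).le]
  congr 1
  have hDne : ∀ z, lamj + lam z * ξ ≠ 0 :=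
    fun z => (add_pos hlamj (mul_pos (hpos z) hξ)).ne'
  rw [my_partial_fraction lam hdist lamj ξ (ne_of_gt hξ) hDne, hc]
end

section
/- For any t1, t2 > 0 and θ > 0, ∫_0^{t1} ln(1 + t2/(ν + y)) e^{−θ y} dy = D(t1, ν + t2) − D(t1, ν), where D(t1, t) := θ^{-1} [ ln t − ln(t1 + t) e^{−t1 θ} + e^{t θ} ( Ei(−(t1+t)θ) − Ei(−t θ) ) ], with Ei the exponential integral, and ν > 0. -/
open MeasureTheory Real Set

/-- The exponential integral `Ei(x) = −∫_{−x}^∞ e^{−t}/t dt`. -/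
noncomputable def Ei (x : ℝ) : ℝ := -∫ t in Set.Ioi (-x), Real.exp (-t) / t

/-- `D(t1, t) = θ⁻¹ [ln t − ln(t1+t) e^{−t1 θ} + e^{t θ}(Ei(−(t1+t)θ) − Ei(−tθ))]`. -/
noncomputable def Dfun (θ t1 t : ℝ) : ℝ :=
  θ⁻¹ * (Real.log t - Real.log (t1 + t) * Real.exp (-t1 * θ) +
    Real.exp (t * θ) * (Ei (-((t1 + t) * θ)) - Ei (-(t * θ))))

namespace EiAux

noncomputable def f : ℝ → ℝ := fun t => Real.exp (-t) / t

lemma f_cont : ContinuousOn f {x : ℝ | (0:ℝ) < x} := by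
  apply ContinuousOn.div (Real.continuous_exp.comp continuous_neg).continuousOn
    continuousOn_id
  intro x hx; exact ne_of_gt hx

lemma f_int {a : ℝ} (ha : 0 < a) : IntegrableOn f (Set.Ioi a) := by
  have hg : IntegrableOn (fun t : ℝ => Real.exp (-t) * a⁻¹) (Set.Ioi a) := by
    have := (exp_neg_integrableOn_Ioi a (one_pos)).mul_const a⁻¹
    exact IntegrableOn.congr_fun this (fun t _ => by simp) measurableSet_Ioi
  refine Integrable.mono hg ?_ ?_
  · exact (f_cont.mono (fun x hx => lt_trans ha hx)).aestronglyMeasurable measurableSet_Ioi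
  · filter_upwards [ae_restrict_mem measurableSet_Ioi] with t ht
    have ht0 : 0 < t := lt_trans ha ht
    simp only [f]
    rw [Real.norm_eq_abs, Real.norm_eq_abs, abs_of_pos (div_pos (Real.exp_pos _) ht0),
      abs_of_pos (mul_pos (Real.exp_pos _) (inv_pos.mpr ha))]
    rw [div_eq_mul_inv]
    exact mul_le_mul_of_nonneg_left (inv_anti₀ ha (le_of_lt ht)) (Real.exp_pos _).le

noncomputable def Phi (a : ℝ) : ℝ := ∫ t in Set.Ioi a, f t

lemma Phi_split {a b : ℝ} (ha : 0 < a) (hab : a ≤ b) :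
    Phi a = (∫ t in a..b, f t) + Phi b := by
  have hb : 0 < b := lt_of_lt_of_le ha hab
  rw [intervalIntegral.integral_of_le hab, Phi, Phi,
    ← setIntegral_union (Set.Ioc_disjoint_Ioi le_rfl) measurableSet_Ioi
      ((f_int ha).mono_set Set.Ioc_subset_Ioi_self) (f_int hb),
    Set.Ioc_union_Ioi_eq_Ioi hab]

lemma Phi_eq {a b : ℝ} (ha : 0 < a) (hb : 0 < b) :
    Phi b = Phi a - ∫ t in a..b, f t := by
  rcases le_total a b with h | h
  · rw [Phi_split ha h]; ring
  · rw [Phi_split hb h, intervalIntegral.integral_symm]; ring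

lemma Phi_hasDerivAt {a : ℝ} (ha : 0 < a) : HasDerivAt Phi (-f a) a := by
  have hFTC : HasDerivAt (fun u => ∫ t in a..u, f t) (f a) a := by
    refine intervalIntegral.integral_hasDerivAt_right IntervalIntegrable.refl ?_ ?_
    · exact ContinuousOn.stronglyMeasurableAtFilter isOpen_Ioi
        (f_cont.mono (fun x hx => hx)) a ha
    · exact (f_cont.mono (fun x hx => hx)).continuousAt (Ioi_mem_nhds ha)
  have heq : (fun u => Phi a - ∫ t in a..u, f t) =ᶠ[nhds a] Phi := by
    filter_upwards [Ioi_mem_nhds ha] with u hu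
    exact (Phi_eq ha hu).symm
  have := ((hFTC.const_sub (Phi a)))
  exact this.congr_of_eventuallyEq heq.symm |>.congr_deriv (by ring)

lemma Ei_eq (x : ℝ) : Ei x = -Phi (-x) := rfl

lemma Ei_hasDerivAt {x : ℝ} (hx : x < 0) : HasDerivAt Ei (Real.exp x / x) x := by
  have h1 : HasDerivAt Phi (-f (-x)) (-x) := Phi_hasDerivAt (by linarith)
  have h2 : HasDerivAt (fun y : ℝ => Phi (-y)) (f (-x)) x := by
    have := h1.comp x (hasDerivAt_neg x)
    exact this.congr_deriv (by ring)
  have h3 := h2.neg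
  have : Ei = fun y : ℝ => -Phi (-y) := rfl
  rw [this]
  refine h3.congr_deriv ?_
  symm
  simp only [f]
  rw [neg_neg]
  field_simp

end EiAux

open EiAux in
/-- antiderivative piece: `G t y = θ⁻¹ (−ln(t+y)e^{−θy} + e^{tθ} Ei(−(t+y)θ))` -/
lemma G_hasDerivAt (θ t : ℝ) (hθ : 0 < θ) (ht : 0 < t) {y : ℝ} (hy : 0 ≤ y) :
    HasDerivAt (fun y => θ⁻¹ * (-(Real.log (t + y) * Real.exp (-θ * y)) +
        Real.exp (t * θ) * Ei (-((t + y) * θ))))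
      (Real.log (t + y) * Real.exp (-θ * y)) y := by
  have hty : 0 < t + y := by linarith
  -- derivative of log (t+y)
  have hlog : HasDerivAt (fun y : ℝ => Real.log (t + y)) (1 / (t + y)) y := by
    have h1 : HasDerivAt (fun y : ℝ => t + y) 1 y := (hasDerivAt_id y).const_add t
    have := (Real.hasDerivAt_log (ne_of_gt hty)).comp y h1
    exact this.congr_deriv (by ring)
  -- derivative of exp (-θ*y)
  have hexp : HasDerivAt (fun y : ℝ => Real.exp (-θ * y)) (-θ * Real.exp (-θ * y)) y := by
    have h1 : HasDerivAt (fun y : ℝ => -θ * y) (-θ) y := by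
      simpa using (hasDerivAt_id y).const_mul (-θ)
    have := h1.exp
    convert this using 1
    ring
  -- derivative of Ei (-((t+y)*θ))
  have hEi : HasDerivAt (fun y : ℝ => Ei (-((t + y) * θ)))
      (Real.exp (-((t + y) * θ)) / (t + y)) y := by
    have hneg : -((t + y) * θ) < 0 := by
      have := mul_pos hty hθ; linarith
    have h1 : HasDerivAt (fun y : ℝ => -((t + y) * θ)) (-θ) y := by
      have h2 : HasDerivAt (fun y : ℝ => t + y) 1 y := (hasDerivAt_id y).const_add t
      have := (h2.mul_const θ).neg
      exact this.congr_deriv (by ring)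
    have := (Ei_hasDerivAt hneg).comp y h1
    refine this.congr_deriv ?_
    symm
    rw [div_mul_eq_mul_div, div_eq_div_iff (ne_of_gt hty)
      (neg_ne_zero.mpr (mul_pos hty hθ).ne')]
    ring
  have hprod := hlog.mul hexp
  have hfull := ((hprod.neg).add ((hEi.const_mul (Real.exp (t * θ))))).const_mul θ⁻¹
  refine hfull.congr_deriv ?_
  symm
  have hexpsum : Real.exp (t * θ) * (Real.exp (-((t + y) * θ)) / (t + y))
      = Real.exp (-θ * y) / (t + y) := by
    rw [mul_div_assoc', ← Real.exp_add]
    ring_nf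
  rw [hexpsum]
  field_simp
  ring


/-- Closed form of `μ_0` (Lemma 1): for `t1, t2, θ, ν > 0`,
`∫_0^{t1} ln(1 + t2/(ν + y)) e^{−θ y} dy = D(t1, ν + t2) − D(t1, ν)`. -/
theorem stmt4 (t1 t2 θ ν : ℝ) (ht1 : 0 < t1) (ht2 : 0 < t2) (hθ : 0 < θ) (hν : 0 < ν) :
    ∫ y in Set.Ioc (0 : ℝ) t1, Real.log (1 + t2 / (ν + y)) * Real.exp (-θ * y) =
      Dfun θ t1 (ν + t2) - Dfun θ t1 ν := by
  have h0t1 : (0:ℝ) ≤ t1 := ht1.le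
  rw [← intervalIntegral.integral_of_le h0t1]
  have hF : ∀ y ∈ Set.uIcc (0:ℝ) t1, HasDerivAt (fun y =>
      (θ⁻¹ * (-(Real.log ((ν + t2) + y) * Real.exp (-θ * y)) +
        Real.exp ((ν + t2) * θ) * Ei (-(((ν + t2) + y) * θ)))) -
      (θ⁻¹ * (-(Real.log (ν + y) * Real.exp (-θ * y)) +
        Real.exp (ν * θ) * Ei (-((ν + y) * θ)))))
      (Real.log (1 + t2 / (ν + y)) * Real.exp (-θ * y)) y := by
    intro y hy
    rw [Set.uIcc_of_le h0t1] at hy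
    have hy0 : 0 ≤ y := hy.1
    have h1 := G_hasDerivAt θ (ν + t2) hθ (by linarith) hy0
    have h2 := G_hasDerivAt θ ν hθ hν hy0
    have h3 := h1.sub h2
    refine h3.congr_deriv ?_
    symm
    have hνy : 0 < ν + y := by linarith
    have harg : (1 : ℝ) + t2 / (ν + y) = (ν + t2 + y) / (ν + y) := by
      field_simp; ring
    rw [harg, Real.log_div (by positivity) (ne_of_gt hνy)]
    ring
  have hcont : ContinuousOn
      (fun y => Real.log (1 + t2 / (ν + y)) * Real.exp (-θ * y)) (Set.uIcc (0:ℝ) t1) := by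
    rw [Set.uIcc_of_le h0t1]
    apply ContinuousOn.mul
    · apply ContinuousOn.log
      · apply ContinuousOn.add continuousOn_const
        apply ContinuousOn.div continuousOn_const
          (continuousOn_const.add continuousOn_id)
        intro y hy
        have : 0 < ν + y := by have := hy.1; linarith
        exact ne_of_gt this
      · intro y hy
        have h1 : 0 < ν + y := by have := hy.1; linarith
        have : 0 < 1 + t2 / (ν + y) := by positivity
        exact ne_of_gt this
    · exact (Real.continuous_exp.comp (continuous_const.mul continuous_id)).continuousOn
  rw [intervalIntegral.integral_eq_sub_of_hasDerivAt hF hcont.intervalIntegrable]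
  simp only [Dfun, add_zero, mul_zero, neg_zero, Real.exp_zero, mul_one]
  ring_nf
end

section
/- Let B be Exponential(1) and ν, λ, ξ > 0. Then E[ log₂(1 + λB/ν) · 1{λB/ν ≥ ξ} ] = log₂(1+ξ) e^{−ξν/λ} − log₂(e) · e^{ν/λ} Ei(−ν(1+ξ)/λ). -/
open MeasureTheory ProbabilityTheory Real Set

open scoped ENNReal NNReal
open Filter Topology

lemma integrableOn_exp_div {u : ℝ} (hu : 0 < u) :
    IntegrableOn (fun t => Real.exp (-t) / t) (Ioi u) := by
  have hg : IntegrableOn (fun t : ℝ => (1/u) * Real.exp (-1 * t)) (Ioi u) :=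
    (exp_neg_integrableOn_Ioi u one_pos).const_mul _
  refine hg.mono' ?_ ?_
  · exact ((continuous_exp.comp continuous_neg).continuousOn.div continuousOn_id
      (fun t ht => (hu.trans ht).ne')).aestronglyMeasurable measurableSet_Ioi
  · filter_upwards [ae_restrict_mem measurableSet_Ioi] with t ht
    have ht0 : 0 < t := hu.trans ht
    rw [Real.norm_eq_abs, abs_of_nonneg (div_nonneg (exp_pos _).le ht0.le)]
    calc Real.exp (-t) / t ≤ Real.exp (-t) / u :=
          div_le_div_of_nonneg_left (exp_pos _).le hu ht.le
      _ = 1/u * Real.exp (-1 * t) := by rw [neg_one_mul]; ring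

lemma J_le {u : ℝ} (hu : 1 ≤ u) :
    ∫ t in Ioi u, Real.exp (-t) / t ≤ Real.exp (-u) := by
  rw [← integral_exp_neg_Ioi u]
  refine setIntegral_mono_on (integrableOn_exp_div (lt_of_lt_of_le one_pos hu))
    (exp_neg_integrableOn_Ioi u one_pos |>.congr_fun (by intro x _; simp [neg_mul]) measurableSet_Ioi) measurableSet_Ioi ?_
  intro t ht
  have ht1 : 1 ≤ t := hu.trans (le_of_lt ht)
  calc Real.exp (-t) / t ≤ Real.exp (-t) / 1 :=
        div_le_div_of_nonneg_left (exp_pos _).le one_pos ht1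
    _ = Real.exp (-t) := by ring

lemma J_nonneg {u : ℝ} (hu : 0 < u) : 0 ≤ ∫ t in Ioi u, Real.exp (-t) / t := by
  refine setIntegral_nonneg measurableSet_Ioi fun t ht => ?_
  exact div_nonneg (exp_pos _).le (hu.trans ht).le

lemma Ei_neg_tendsto : Tendsto (fun u => Ei (-u)) atTop (𝓝 0) := by
  have h : ∀ u : ℝ, Ei (-u) = -∫ t in Ioi u, Real.exp (-t) / t := by
    intro u; simp [Ei]
  have h1 : Tendsto (fun u : ℝ => ∫ t in Ioi u, Real.exp (-t) / t) atTop (𝓝 0) := by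
    refine tendsto_of_tendsto_of_tendsto_of_le_of_le' tendsto_const_nhds
      (tendsto_exp_neg_atTop_nhds_zero.comp tendsto_id) ?_ ?_
    · filter_upwards [eventually_gt_atTop 0] with u hu using J_nonneg hu
    · filter_upwards [eventually_ge_atTop 1] with u hu using J_le hu
  simpa [h] using h1.neg

lemma hasDerivAt_J {u : ℝ} (hu : 0 < u) :
    HasDerivAt (fun v => ∫ t in Ioi v, Real.exp (-t) / t) (-(Real.exp (-u) / u)) u := by
  set b := u / 2 with hb
  have hbpos : 0 < b := by positivity
  have hbu : b < u := by simpa [hb] using half_lt_self hu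
  have key : ∀ v ∈ Ioi b, (∫ t in Ioi v, Real.exp (-t) / t)
      = (∫ t in Ioi b, Real.exp (-t) / t) - ∫ t in b..v, Real.exp (-t) / t := by
    intro v hv
    have hbv : b ≤ v := (le_of_lt hv)
    rw [intervalIntegral.integral_of_le hbv, eq_sub_iff_add_eq, add_comm,
      ← setIntegral_union (Ioc_disjoint_Ioi le_rfl) measurableSet_Ioi
        ((integrableOn_exp_div hbpos).mono_set Ioc_subset_Ioi_self)
        ((integrableOn_exp_div hbpos).mono_set (Ioi_subset_Ioi hbv)),
      Ioc_union_Ioi_eq_Ioi hbv]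
  have hderiv : HasDerivAt (fun v => (∫ t in Ioi b, Real.exp (-t) / t)
      - ∫ t in b..v, Real.exp (-t) / t) (-(Real.exp (-u) / u)) u := by
    have : HasDerivAt (fun v => ∫ t in b..v, Real.exp (-t) / t) (Real.exp (-u) / u) u := by
      refine intervalIntegral.integral_hasDerivAt_right ?_ ?_ ?_
      · rw [intervalIntegrable_iff_integrableOn_Ioc_of_le hbu.le]
        exact (integrableOn_exp_div hbpos).mono_set Ioc_subset_Ioi_self
      · exact ((measurable_exp.comp measurable_neg).div measurable_id).stronglyMeasurable.stronglyMeasurableAtFilter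
      · exact ContinuousAt.div ((continuous_exp.comp continuous_neg).continuousAt)
          continuousAt_id hu.ne'
    simpa using (this.const_sub _)
  exact hderiv.congr_of_eventuallyEq
    (eventuallyEq_of_mem (Ioi_mem_nhds hbu) key)

lemma measurable_f' (c : ℝ) : Measurable (fun x => Real.logb 2 (1 + c*x) * Real.exp (-x)) := by
  have : Measurable fun x : ℝ => 1 + c * x := (measurable_id.const_mul c).const_add 1
  exact ((Real.measurable_log.comp this).div_const (Real.log 2)).mul
    (Real.measurable_exp.comp measurable_neg)

lemma tendsto_f' {c : ℝ} (hc : 0 < c) :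
    Tendsto (fun x => Real.exp (-x) * Real.logb 2 (1 + c*x)) atTop (𝓝 0) := by
  have hlog2 : 0 < Real.log 2 := Real.log_pos one_lt_two
  have hup : Tendsto (fun x : ℝ => (c / Real.log 2) * (x ^ 1 * Real.exp (-x))) atTop (𝓝 0) := by
    simpa using (Real.tendsto_pow_mul_exp_neg_atTop_nhds_zero 1).const_mul (c / Real.log 2)
  refine tendsto_of_tendsto_of_tendsto_of_le_of_le' tendsto_const_nhds hup ?_ ?_
  · filter_upwards [eventually_ge_atTop 0] with x hx
    have : (1:ℝ) ≤ 1 + c*x := by nlinarith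
    exact mul_nonneg (exp_pos _).le (Real.logb_nonneg one_lt_two this)
  · filter_upwards [eventually_ge_atTop 0] with x hx
    have h1 : 0 < 1 + c*x := by nlinarith
    have hlb : Real.log (1 + c*x) ≤ c * x := by
      have := Real.log_le_sub_one_of_pos h1; linarith
    have : Real.logb 2 (1 + c*x) ≤ c * x / Real.log 2 :=
      div_le_div_of_nonneg_right hlb hlog2.le |>.trans_eq rfl
    calc Real.exp (-x) * Real.logb 2 (1 + c*x) ≤ Real.exp (-x) * (c * x / Real.log 2) := by
          exact mul_le_mul_of_nonneg_left this (exp_pos _).le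
      _ = (c / Real.log 2) * (x ^ 1 * Real.exp (-x)) := by ring

lemma integrableOn_f' {a c : ℝ} (ha : 0 < a) (hc : 0 < c) :
    IntegrableOn (fun x => Real.logb 2 (1 + c*x) * Real.exp (-x)) (Ioi a) := by
  have hlog2 : 0 < Real.log 2 := Real.log_pos one_lt_two
  have hg : IntegrableOn (fun x : ℝ => (c / Real.log 2) * (Real.exp (-x) * x ^ ((2:ℝ)-1)))
      (Ioi a) :=
    (((Real.GammaIntegral_convergent two_pos).mono_set (Ioi_subset_Ioi ha.le)).const_mul _)
  refine hg.mono' ((measurable_f' c).aestronglyMeasurable.restrict) ?_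
  filter_upwards [ae_restrict_mem measurableSet_Ioi] with x hx
  have hx0 : 0 < x := ha.trans hx
  have h1 : (1:ℝ) ≤ 1 + c*x := by nlinarith
  have h1' : (0:ℝ) < 1 + c*x := by linarith
  have hlb : Real.log (1 + c*x) ≤ c * x := by
    have := Real.log_le_sub_one_of_pos h1'; linarith
  rw [Real.norm_eq_abs, abs_of_nonneg (mul_nonneg (Real.logb_nonneg one_lt_two h1) (exp_pos _).le)]
  have hxp : x ^ ((2:ℝ)-1) = x := by
    norm_num
  rw [hxp]
  calc Real.logb 2 (1 + c*x) * Real.exp (-x)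
      ≤ (c * x / Real.log 2) * Real.exp (-x) := by
        refine mul_le_mul_of_nonneg_right ?_ (exp_pos _).le
        exact div_le_div_of_nonneg_right hlb hlog2.le
    _ = c / Real.log 2 * (Real.exp (-x) * x) := by ring

lemma key_integral {a c : ℝ} (ha : 0 < a) (hc : 0 < c) :
    ∫ x in Ioi a, Real.logb 2 (1 + c*x) * Real.exp (-x)
      = Real.logb 2 (1 + c*a) * Real.exp (-a)
        - Real.logb 2 (Real.exp 1) * Real.exp (1/c) * Ei (-(a + 1/c)) := by
  have hlog2 : 0 < Real.log 2 := Real.log_pos one_lt_two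
  set K : ℝ := Real.logb 2 (Real.exp 1) * Real.exp (1/c) with hK
  set F : ℝ → ℝ := fun x => -(Real.exp (-x) * Real.logb 2 (1 + c*x)) + K * Ei (-(x + 1/c))
    with hF
  have hEi : ∀ y : ℝ, Ei (-(y + 1/c)) = -∫ t in Ioi (y + 1/c), Real.exp (-t) / t := by
    intro y; simp [Ei]
  have hderiv : ∀ x ∈ Ici a, HasDerivAt F (Real.logb 2 (1 + c*x) * Real.exp (-x)) x := by
    intro x hx
    have hx0 : 0 < x := lt_of_lt_of_le ha hx
    have h1 : (0:ℝ) < 1 + c*x := by nlinarith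
    have hxc : 0 < x + 1/c := by positivity
    have hlin : HasDerivAt (fun y : ℝ => 1 + c*y) c x := by
      simpa using ((hasDerivAt_id x).const_mul c).const_add (1:ℝ)
    have hL : HasDerivAt (fun y => Real.logb 2 (1 + c*y)) ((c / (1 + c*x)) / Real.log 2) x := by
      simp only [Real.logb]
      exact (hlin.log h1.ne').div_const _
    have hE : HasDerivAt (fun y : ℝ => Real.exp (-y)) (-Real.exp (-x)) x := by
      simpa using (hasDerivAt_neg x).exp
    have hF1 : HasDerivAt (fun y => -(Real.exp (-y) * Real.logb 2 (1 + c*y)))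
        (-((-Real.exp (-x)) * Real.logb 2 (1 + c*x)
          + Real.exp (-x) * ((c / (1 + c*x)) / Real.log 2))) x := (hE.mul hL).neg
    have hJc : HasDerivAt (fun y : ℝ => ∫ t in Ioi (y + 1/c), Real.exp (-t) / t)
        (-(Real.exp (-(x + 1/c)) / (x + 1/c))) x := by
      have h := (hasDerivAt_J hxc).comp x ((hasDerivAt_id x).add_const (1/c))
      rw [mul_one] at h
      exact h
    have hF2 : HasDerivAt (fun y => Ei (-(y + 1/c)))
        (Real.exp (-(x + 1/c)) / (x + 1/c)) x := by
      have h : (fun y => Ei (-(y + 1/c))) = fun y => -∫ t in Ioi (y + 1/c), Real.exp (-t) / t :=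
        funext hEi
      rw [h]
      have h2 := hJc.neg
      rw [neg_neg] at h2
      exact h2
    have hsum := hF1.add ((hF2.const_mul K))
    refine hsum.congr_deriv ?_
    have hexp : Real.exp (-(x + 1/c)) = Real.exp (-x) / Real.exp (1/c) := by
      rw [eq_div_iff (exp_pos _).ne', ← Real.exp_add]; ring_nf
    have hlogb_e : Real.logb 2 (Real.exp 1) = 1 / Real.log 2 := by
      simp [Real.logb, Real.log_exp]
    have hKE : K * (Real.exp (-(x + 1/c)) / (x + 1/c))
        = Real.exp (-x) * ((c / (1 + c*x)) / Real.log 2) := by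
      rw [hK, hlogb_e, hexp, show x + 1/c = (1 + c*x)/c by field_simp; ring]
      field_simp
    rw [hKE]
    ring
  have htend : Tendsto F atTop (𝓝 0) := by
    have t2 : Tendsto (fun x : ℝ => K * Ei (-(x + 1/c))) atTop (𝓝 (K * 0)) :=
      (Ei_neg_tendsto.comp (tendsto_atTop_add_const_right atTop (1/c) tendsto_id)).const_mul K
    have ht := ((tendsto_f' hc).neg).add t2
    rw [show (0:ℝ) = -0 + K * 0 by ring]
    exact ht
  have := integral_Ioi_of_hasDerivAt_of_tendsto' hderiv (integrableOn_f' ha hc) htend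
  rw [this, hF]
  simp only [hK]
  ring


/-- Expected rate with no unknown interference and unknown signal fading
(Corollary 2): for `B ~ Exponential(1)` and `ν, λ, ξ > 0`,
`E[log₂(1 + λB/ν) 1{λB/ν ≥ ξ}] = log₂(1+ξ) e^{−ξν/λ} − log₂(e) e^{ν/λ} Ei(−ν(1+ξ)/λ)`. -/
theorem stmt11 {Ω : Type*} [MeasurableSpace Ω] (P : Measure Ω) [IsProbabilityMeasure P]
    (B : Ω → ℝ) (hB : Measurable B) (hmap : Measure.map B P = expMeasure 1)
    (ν lam ξ : ℝ) (hν : 0 < ν) (hlam : 0 < lam) (hξ : 0 < ξ) :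
    ∫ ω, Set.indicator {x : ℝ | lam * x / ν ≥ ξ}
        (fun x => Real.logb 2 (1 + lam * x / ν)) (B ω) ∂P =
      Real.logb 2 (1 + ξ) * Real.exp (-(ξ * ν / lam)) -
        Real.logb 2 (Real.exp 1) * Real.exp (ν / lam) * Ei (-(ν * (1 + ξ) / lam)) := by
  have hs : MeasurableSet {x : ℝ | lam * x / ν ≥ ξ} :=
    measurableSet_le measurable_const ((measurable_id.const_mul lam).div_const ν)
  have hgm : Measurable (Set.indicator {x : ℝ | lam * x / ν ≥ ξ}
      (fun x => Real.logb 2 (1 + lam * x / ν))) := by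
    refine Measurable.indicator ?_ hs
    have : Measurable fun x : ℝ => 1 + lam * x / ν :=
      ((measurable_id.const_mul lam).div_const ν).const_add 1
    exact (Real.measurable_log.comp this).div_const (Real.log 2)
  rw [← integral_map hB.aemeasurable hgm.aestronglyMeasurable, hmap]
  have hdens : expMeasure 1
      = volume.withDensity (fun x => ((gammaPDFReal 1 1 x).toNNReal : ℝ≥0∞)) := rfl
  rw [hdens, integral_withDensity_eq_integral_smul (measurable_gammaPDFReal 1 1).real_toNNReal]
  set a : ℝ := ξ * ν / lam with ha_def
  have ha : 0 < a := by positivity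
  have hc : 0 < lam / ν := div_pos hlam hν
  have hset : {x : ℝ | lam * x / ν ≥ ξ} = Ici a := by
    ext y
    simp only [mem_setOf_eq, mem_Ici, ge_iff_le, ha_def]
    rw [le_div_iff₀ hν, div_le_iff₀ hlam]
    constructor <;> intro h <;> nlinarith
  have hfun : (fun x => ((gammaPDFReal 1 1 x).toNNReal : ℝ≥0) • Set.indicator
        {x : ℝ | lam * x / ν ≥ ξ} (fun x => Real.logb 2 (1 + lam * x / ν)) x)
      = Set.indicator (Ici a) (fun x => Real.logb 2 (1 + lam * x / ν) * Real.exp (-x)) := by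
    funext x
    rw [hset]
    by_cases hx : x ∈ Ici a
    · have hx0 : (0:ℝ) ≤ x := le_trans ha.le hx
      have hpdf : gammaPDFReal 1 1 x = Real.exp (-x) := by
        simp [gammaPDFReal, hx0, Real.Gamma_one]
      rw [indicator_of_mem hx, indicator_of_mem hx, hpdf, NNReal.smul_def,
        Real.coe_toNNReal _ (exp_pos _).le, smul_eq_mul]
      ring
    · rw [indicator_of_notMem hx, indicator_of_notMem hx, smul_zero]
  rw [hfun, integral_indicator measurableSet_Ici, integral_Ici_eq_integral_Ioi]
  have hrw : (fun x => Real.logb 2 (1 + lam * x / ν) * Real.exp (-x))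
      = fun x => Real.logb 2 (1 + (lam/ν) * x) * Real.exp (-x) := by
    funext x; rw [div_mul_eq_mul_div]
  rw [show (∫ x in Ioi a, Real.logb 2 (1 + lam * x / ν) * Real.exp (-x))
      = ∫ x in Ioi a, Real.logb 2 (1 + (lam/ν) * x) * Real.exp (-x) from by rw [hrw],
    key_integral ha hc]
  have h1 : (lam/ν) * a = ξ := by rw [ha_def]; field_simp
  have h2 : 1 / (lam/ν) = ν / lam := one_div_div lam ν
  have h3 : a + ν / lam = ν * (1 + ξ) / lam := by rw [ha_def]; field_simp; ring
  rw [h1, h2, h3, ha_def]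
end
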